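/- For every γ > 0 there exists B₀ such that the following holds for every even integer B ≥ B₀. Let σ be a probability mass function on Fin B, let τ be a probability mass function on pair-selections, and let (s,t) be drawn from the product distribution σ × τ. Assume (i) Pr[s ∈ T(t)] ≤ 1/42, and (ii) the conditional entropy H(s | t), computed under σ × τ conditioned on the event s ∉ T(t), is at least (1 − γ)·log₂ B. Then σ assigns total mass at least 1/5 to the set S* = { x ∈ Fin B : σ(x) ≤ B^{7γ−1} }. -/

import Mathlib

open Finset

/-- `memT t x` : the element `x ∈ Fin B` belongs to the set `T(t)` determined by the
pair-selection `t : Fin (B/2) → Bool`, namely `T(t) = { 2k + (if t k then 1 else 0) }`. -/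
def memT {B : ℕ} (t : Fin (B / 2) → Bool) (x : Fin B) : Prop :=
  ∃ k : Fin (B / 2), (x : ℕ) = 2 * (k : ℕ) + (if t k then 1 else 0)

instance {B : ℕ} (t : Fin (B / 2) → Bool) (x : Fin B) : Decidable (memT t x) := by
  unfold memT; infer_instance

/-- The probability that `s ∈ T(t)` when `(s,t)` is drawn from the product `σ × τ`. -/
noncomputable def prHit {B : ℕ} (σ : Fin B → ℝ) (τ : (Fin (B / 2) → Bool) → ℝ) : ℝ :=
  ∑ x : Fin B, ∑ t : Fin (B / 2) → Bool, if memT t x then σ x * τ t else 0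

/-- The joint distribution `σ × τ` conditioned on the event `s ∉ T(t)`. -/
noncomputable def condJoint {B : ℕ} (σ : Fin B → ℝ) (τ : (Fin (B / 2) → Bool) → ℝ)
    (x : Fin B) (t : Fin (B / 2) → Bool) : ℝ :=
  (if memT t x then 0 else σ x * τ t) /
    ∑ x' : Fin B, ∑ t' : Fin (B / 2) → Bool, if memT t' x' then 0 else σ x' * τ t'

/-- `H(s | t)`, in bits, under `σ × τ` conditioned on `s ∉ T(t)`:
`H(s | t) = ∑_t Pr[t] · H(s | t = t) = ∑_t ∑_x −p(x,t) · log₂ (p(x,t)/p(t))`. -/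
noncomputable def condEntS {B : ℕ} (σ : Fin B → ℝ) (τ : (Fin (B / 2) → Bool) → ℝ) : ℝ :=
  ∑ t : Fin (B / 2) → Bool, ∑ x : Fin B,
    -(condJoint σ τ x t) *
      Real.logb 2 (condJoint σ τ x t / ∑ x' : Fin B, condJoint σ τ x' t)

/-- `H(t | s)`, in bits, under `σ × τ` conditioned on `s ∉ T(t)`. -/
noncomputable def condEntT {B : ℕ} (σ : Fin B → ℝ) (τ : (Fin (B / 2) → Bool) → ℝ) : ℝ :=
  ∑ x : Fin B, ∑ t : Fin (B / 2) → Bool,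
    -(condJoint σ τ x t) *
      Real.logb 2 (condJoint σ τ x t / ∑ t' : Fin (B / 2) → Bool, condJoint σ τ x t')

lemma card_not_memT {B : ℕ} (hB : 2 ∣ B) (t : Fin (B / 2) → Bool) :
    (Finset.univ.filter (fun x : Fin B => ¬ memT t x)).card ≤ B / 2 := by
  have key : ∀ x : Fin B, (x : ℕ) / 2 < B / 2 := by
    intro x; have := x.isLt; omega
  calc (Finset.univ.filter (fun x : Fin B => ¬ memT t x)).card
      ≤ (Finset.univ : Finset (Fin (B / 2))).card := by
        apply Finset.card_le_card_of_injOn (fun x => ⟨(x : ℕ) / 2, key x⟩)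
          (fun _ _ => Finset.mem_univ _)
        intro x hx y hy hxy
        simp only [Finset.coe_filter, Set.mem_setOf_eq, Finset.mem_univ, true_and,
          memT, not_exists] at hx hy
        simp only [Fin.mk.injEq] at hxy
        set k : Fin (B / 2) := ⟨(x : ℕ) / 2, key x⟩ with hk
        have hx' := hx k
        have hy' := hy k
        apply Fin.ext
        have hkv : (k : ℕ) = (x : ℕ) / 2 := rfl
        cases hb : t k <;> rw [hb] at hx' hy' <;> simp at hx' hy' <;> omega
    _ = B / 2 := by simp

lemma gibbs {ι : Type*} [Fintype ι] (p q : ι → ℝ) (hp : ∀ i, 0 ≤ p i)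
    (hq : ∀ i, 0 ≤ q i) (hq1 : ∑ i, q i ≤ 1)
    (hpq : ∀ i, 0 < p i → 0 < q i) :
    ∑ i, -(p i) * Real.logb 2 (p i / ∑ j, p j) ≤ ∑ i, -(p i) * Real.logb 2 (q i) := by
  set S := ∑ j, p j with hS
  have hS0 : 0 ≤ S := Finset.sum_nonneg fun i _ => hp i
  have hlog2 : (0:ℝ) < Real.log 2 := Real.log_pos one_lt_two
  have key : ∀ i, -(p i) * Real.logb 2 (p i / S) - (-(p i) * Real.logb 2 (q i))
      ≤ (q i * S - p i) / Real.log 2 := by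
    intro i
    rcases eq_or_lt_of_le (hp i) with h0 | h0
    · rw [← h0]
      have : 0 ≤ q i * S / Real.log 2 := by
        apply div_nonneg (mul_nonneg (hq i) hS0) hlog2.le
      simpa using this
    · have hqi := hpq i h0
      have hSi : p i ≤ S := Finset.single_le_sum (f := p) (fun j _ => hp j) (Finset.mem_univ i)
      have hSpos : 0 < S := lt_of_lt_of_le h0 hSi
      have hlog : Real.logb 2 (q i) - Real.logb 2 (p i / S) = Real.logb 2 (q i * S / p i) := by
        rw [Real.logb_div (ne_of_gt h0) (ne_of_gt hSpos),
            Real.logb_div (by positivity) (ne_of_gt h0),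
            Real.logb_mul (ne_of_gt hqi) (ne_of_gt hSpos)]
        ring
      have hln : Real.log (q i * S / p i) ≤ q i * S / p i - 1 :=
        Real.log_le_sub_one_of_pos (by positivity)
      have h2 : Real.logb 2 (q i * S / p i) ≤ (q i * S / p i - 1) / Real.log 2 := by
        rw [Real.logb]
        exact div_le_div_of_nonneg_right hln hlog2.le |>.trans_eq rfl
      have h3 : p i * Real.logb 2 (q i * S / p i) ≤ p i * ((q i * S / p i - 1) / Real.log 2) :=
        mul_le_mul_of_nonneg_left h2 h0.le
      have h4 : p i * ((q i * S / p i - 1) / Real.log 2) = (q i * S - p i) / Real.log 2 := by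
        field_simp
      calc -(p i) * Real.logb 2 (p i / S) - (-(p i) * Real.logb 2 (q i))
          = p i * (Real.logb 2 (q i) - Real.logb 2 (p i / S)) := by ring
        _ = p i * Real.logb 2 (q i * S / p i) := by rw [hlog]
        _ ≤ (q i * S - p i) / Real.log 2 := h3.trans_eq h4
  have hsum := Finset.sum_le_sum (fun i (_ : i ∈ Finset.univ) => key i)
  rw [Finset.sum_sub_distrib] at hsum
  have hrhs : ∑ i, (q i * S - p i) / Real.log 2 ≤ 0 := by
    rw [← Finset.sum_div]
    apply div_nonpos_of_nonpos_of_nonneg _ hlog2.le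
    rw [Finset.sum_sub_distrib, ← Finset.sum_mul]
    have : (∑ i, q i) * S ≤ 1 * S := mul_le_mul_of_nonneg_right hq1 hS0
    simp only [one_mul] at this
    linarith
  linarith

set_option maxHeartbeats 1000000 in
theorem stmt1 (γ : ℝ) (hγ : 0 < γ) :
    ∃ B₀ : ℕ, ∀ B : ℕ, B₀ ≤ B → 2 ∣ B →
      ∀ σ : Fin B → ℝ, (∀ x, 0 ≤ σ x) → (∑ x, σ x) = 1 →
      ∀ τ : (Fin (B / 2) → Bool) → ℝ, (∀ t, 0 ≤ τ t) → (∑ t, τ t) = 1 →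
      prHit σ τ ≤ 1 / 42 →
      (1 - γ) * Real.logb 2 (B : ℝ) ≤ condEntS σ τ →
      1 / 5 ≤ ∑ x : Fin B,
        if σ x ≤ (B : ℝ) ^ (7 * γ - 1) then σ x else 0 := by
  set n : ℕ := ⌈1/γ⌉₊ + 1 with hn
  refine ⟨2 ^ n, ?_⟩
  intro B hB hBdvd σ hσ0 hσ1 τ hτ0 hτ1 hhit hent
  have hB2 : 2 ≤ B := le_trans (Nat.pow_le_pow_right (by norm_num) (by omega) : 2^1 ≤ 2^n) hB
  have hBR : (2:ℝ) ≤ (B:ℝ) := by exact_mod_cast hB2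
  have hBpos : (0:ℝ) < B := by linarith
  have hσ1' : ∀ x, σ x ≤ 1 := by
    intro x
    have := Finset.single_le_sum (f := σ) (fun i _ => hσ0 i) (Finset.mem_univ x)
    rw [hσ1] at this; exact this
  by_cases hγ7 : 1 ≤ 7 * γ
  · -- trivial case: every point is "small"
    have hθ : (1:ℝ) ≤ (B:ℝ) ^ (7 * γ - 1) :=
      Real.one_le_rpow (by linarith) (by linarith)
    have : ∀ x : Fin B, (if σ x ≤ (B:ℝ) ^ (7 * γ - 1) then σ x else 0) = σ x :=
      fun x => if_pos (le_trans (hσ1' x) hθ)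
    rw [Finset.sum_congr rfl (fun x _ => this x), hσ1]
    norm_num
  push_neg at hγ7
  -- L bounds
  set L : ℝ := Real.logb 2 (B : ℝ) with hLdef
  have hLB : 1/γ + 1 ≤ L := by
    have h1 : ((2:ℝ)^n) ≤ (B:ℝ) := by
      have : ((2^n : ℕ) : ℝ) ≤ (B:ℝ) := by exact_mod_cast hB
      push_cast at this; exact this
    have h2 : Real.logb 2 ((2:ℝ)^n) = (n:ℝ) := by
      rw [Real.logb_pow, Real.logb_self_eq_one one_lt_two, mul_one]
    have h3 : Real.logb 2 ((2:ℝ)^n) ≤ L :=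
      Real.logb_le_logb_of_le one_lt_two (by positivity) h1
    have h4 : 1/γ + 1 ≤ (n:ℝ) := by
      have := Nat.le_ceil (1/γ)
      rw [hn]; push_cast; linarith
    linarith [h2 ▸ h3]
  have hL0 : (0:ℝ) ≤ L := by
    have : (0:ℝ) < 1/γ := by positivity
    linarith
  -- Z setup
  set Z : ℝ := ∑ x' : Fin B, ∑ t' : Fin (B / 2) → Bool, if memT t' x' then 0 else σ x' * τ t'
    with hZdef
  have hZsum : prHit σ τ + Z = 1 := by
    rw [prHit, hZdef, ← Finset.sum_add_distrib]
    have : ∀ x : Fin B,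
        ((∑ t, if memT t x then σ x * τ t else 0) + ∑ t, if memT t x then 0 else σ x * τ t)
        = σ x := by
      intro x
      rw [← Finset.sum_add_distrib]
      have h1 : ∀ t : Fin (B/2) → Bool,
          ((if memT t x then σ x * τ t else 0) + if memT t x then 0 else σ x * τ t)
          = σ x * τ t := by
        intro t; split <;> ring
      rw [Finset.sum_congr rfl (fun t _ => h1 t), ← Finset.mul_sum, hτ1, mul_one]
    rw [Finset.sum_congr rfl (fun x _ => this x), hσ1]
  have hZ41 : 41/42 ≤ Z := by linarith
  have hZpos : (0:ℝ) < Z := by linarith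
  have hcond : ∀ (x : Fin B) (t : Fin (B/2) → Bool),
      condJoint σ τ x t = (if memT t x then 0 else σ x * τ t) / Z := by
    intro x t; rw [hZdef]; rfl
  have hcnn : ∀ x t, 0 ≤ condJoint σ τ x t := by
    intro x t; rw [hcond]
    apply div_nonneg _ hZpos.le
    split
    · exact le_refl 0
    · exact mul_nonneg (hσ0 x) (hτ0 t)

  have hcsum : ∑ x : Fin B, ∑ t, condJoint σ τ x t = 1 := by
    have h : ∑ x : Fin B, ∑ t, condJoint σ τ x t
        = (∑ x : Fin B, ∑ t, if memT t x then 0 else σ x * τ t) / Z := by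
      simp only [hcond, Finset.sum_div]
    rw [h, ← hZdef, div_self hZpos.ne']
  set θ : ℝ := (B:ℝ) ^ (7 * γ - 1) with hθdef
  have hθpos : 0 < θ := Real.rpow_pos_of_pos hBpos _
  have hlogθ : Real.logb 2 θ = (7 * γ - 1) * L := by
    rw [hθdef, hLdef, Real.logb, Real.logb, Real.log_rpow hBpos]
    ring
  by_contra hM
  push_neg at hM
  rw [← Finset.sum_filter] at hM
  set P : Fin B → Prop := fun x => σ x ≤ θ with hP
  set α : ℝ := ∑ x ∈ Finset.univ.filter P, ∑ t, condJoint σ τ x t with hα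
  set β : ℝ := ∑ x ∈ Finset.univ.filter (fun x => ¬ P x), ∑ t, condJoint σ τ x t with hβ
  have hα0 : 0 ≤ α := Finset.sum_nonneg fun x _ => Finset.sum_nonneg fun t _ => hcnn x t
  have hβ0 : 0 ≤ β := Finset.sum_nonneg fun x _ => Finset.sum_nonneg fun t _ => hcnn x t
  have hαβ : α + β = 1 := by
    rw [hα, hβ, Finset.sum_filter_add_sum_filter_not, hcsum]
  have hαZ : α * Z ≤ ∑ x ∈ Finset.univ.filter P, σ x := by
    rw [hα, Finset.sum_mul]
    apply Finset.sum_le_sum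
    intro x _
    have h1 : (∑ t, condJoint σ τ x t) * Z = ∑ t, if memT t x then 0 else σ x * τ t := by
      simp only [hcond]
      rw [← Finset.sum_div, div_mul_cancel₀ _ hZpos.ne']
    rw [h1]
    calc ∑ t, (if memT t x then 0 else σ x * τ t) ≤ ∑ t, σ x * τ t := by
          apply Finset.sum_le_sum
          intro t _
          split
          · exact mul_nonneg (hσ0 x) (hτ0 t)
          · exact le_refl _
      _ = σ x := by rw [← Finset.mul_sum, hτ1, mul_one]
  have hα42 : α < 42/205 := by
    have h := mul_le_mul_of_nonneg_left hZ41 hα0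
    nlinarith
  -- the comparison distribution
  set qf : (Fin (B/2) → Bool) → Fin B → ℝ :=
    fun t x => if memT t x then 0 else (if σ x ≤ θ then (B:ℝ)⁻¹ else σ x / 2) with hqf
  set w : Fin B → ℝ := fun x => if σ x ≤ θ then L else 1 + (1 - 7*γ) * L with hw
  have step1 : condEntS σ τ ≤ ∑ t, ∑ x, -(condJoint σ τ x t) * Real.logb 2 (qf t x) := by
    rw [condEntS]
    apply Finset.sum_le_sum
    intro t _
    apply gibbs (fun x => condJoint σ τ x t) (qf t) (fun x => hcnn x t)
    · intro x
      rw [hqf]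
      dsimp only
      split
      · exact le_refl 0
      · split
        · positivity
        · linarith [hσ0 x]
    · -- ∑ q ≤ 1
      have hcard := card_not_memT hBdvd t
      have hstep : ∀ x : Fin B, qf t x
          ≤ (if ¬ memT t x ∧ σ x ≤ θ then (B:ℝ)⁻¹ else 0) + σ x / 2 := by
        intro x
        rw [hqf]; dsimp only
        by_cases hm : memT t x
        · rw [if_pos hm, if_neg (fun h => h.1 hm)]
          linarith [hσ0 x]
        · by_cases hs : σ x ≤ θ
          · rw [if_neg hm, if_pos hs, if_pos ⟨hm, hs⟩]
            linarith [hσ0 x]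
          · rw [if_neg hm, if_neg hs, if_neg (fun h => hs h.2)]
            linarith
      calc ∑ x, qf t x
          ≤ ∑ x : Fin B, ((if ¬ memT t x ∧ σ x ≤ θ then (B:ℝ)⁻¹ else 0) + σ x / 2) :=
            Finset.sum_le_sum fun x _ => hstep x
        _ = (∑ x : Fin B, if ¬ memT t x ∧ σ x ≤ θ then (B:ℝ)⁻¹ else 0)
              + (∑ x : Fin B, σ x) / 2 := by
            rw [Finset.sum_add_distrib, Finset.sum_div]
        _ ≤ 1/2 + 1/2 := by
            apply add_le_add
            · rw [← Finset.sum_filter, Finset.sum_const, nsmul_eq_mul]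
              have hsub : (Finset.univ.filter (fun x : Fin B => ¬ memT t x ∧ σ x ≤ θ)).card
                  ≤ B / 2 := by
                refine le_trans (Finset.card_le_card ?_) hcard
                intro x hx
                rw [Finset.mem_filter] at hx ⊢
                exact ⟨hx.1, hx.2.1⟩
              have hhalf : ((B/2 : ℕ) : ℝ) * (B:ℝ)⁻¹ = 1/2 := by
                obtain ⟨m, rfl⟩ := hBdvd
                have hm2 : (2*m)/2 = m := by omega
                have hm0 : (m:ℝ) ≠ 0 := by
                  have : 1 ≤ m := by omega
                  exact_mod_cast Nat.one_le_iff_ne_zero.mp this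
                rw [hm2]
                push_cast
                field_simp
              calc ((Finset.univ.filter (fun x : Fin B => ¬ memT t x ∧ σ x ≤ θ)).card : ℝ)
                    * (B:ℝ)⁻¹
                  ≤ ((B/2 : ℕ) : ℝ) * (B:ℝ)⁻¹ := by
                    apply mul_le_mul_of_nonneg_right _ (by positivity)
                    exact_mod_cast hsub
                _ = 1/2 := hhalf
            · rw [hσ1]
        _ = 1 := by norm_num
    · -- positivity transfer
      intro x hx
      have hm : ¬ memT t x := by
        intro h
        rw [hcond, if_pos h, zero_div] at hx
        exact lt_irrefl _ hx
      rw [hcond, if_neg hm] at hx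
      have hnum : 0 < σ x * τ t := by
        have h := mul_pos hx hZpos
        rwa [div_mul_cancel₀ _ hZpos.ne'] at h
      have hσx : 0 < σ x := by
        rcases lt_or_ge 0 (σ x) with h | h
        · exact h
        · exfalso
          have := mul_nonpos_of_nonpos_of_nonneg h (hτ0 t)
          linarith
      rw [hqf]; dsimp only
      rw [if_neg hm]
      split
      · positivity
      · positivity
  have step2 : ∑ t, ∑ x, -(condJoint σ τ x t) * Real.logb 2 (qf t x)
      ≤ ∑ t, ∑ x, condJoint σ τ x t * w x := by
    apply Finset.sum_le_sum
    intro t _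
    apply Finset.sum_le_sum
    intro x _
    by_cases hm : memT t x
    · have hc0 : condJoint σ τ x t = 0 := by rw [hcond, if_pos hm, zero_div]
      rw [hc0]
      simp
    · by_cases hs : σ x ≤ θ
      · have hq : qf t x = (B:ℝ)⁻¹ := by
          rw [hqf]; dsimp only; rw [if_neg hm, if_pos hs]
        have hwx : w x = L := by rw [hw]; dsimp only; rw [if_pos hs]
        rw [hq, hwx, Real.logb_inv, hLdef]
        exact le_of_eq (by ring)
      · have hq : qf t x = σ x / 2 := by
          rw [hqf]; dsimp only; rw [if_neg hm, if_neg hs]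
        have hwx : w x = 1 + (1 - 7*γ) * L := by rw [hw]; dsimp only; rw [if_neg hs]
        rcases eq_or_lt_of_le (hcnn x t) with hc | hc
        · rw [← hc]; simp
        · have hσx : 0 < σ x := lt_trans hθpos (not_le.mp hs)
          have hlb : Real.logb 2 (σ x / 2) = Real.logb 2 (σ x) - 1 := by
            rw [Real.logb_div (ne_of_gt hσx) two_ne_zero, Real.logb_self_eq_one one_lt_two]
          have hmono : (7*γ-1) * L ≤ Real.logb 2 (σ x) := by
            rw [← hlogθ]
            exact Real.logb_le_logb_of_le one_lt_two hθpos (le_of_lt (not_le.mp hs))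
          rw [hq, hwx, hlb]
          nlinarith [mul_le_mul_of_nonneg_left hmono hc.le]
  have step3 : ∑ t, ∑ x, condJoint σ τ x t * w x = α * L + β * (1 + (1 - 7*γ) * L) := by
    rw [Finset.sum_comm]
    have hx : ∀ x : Fin B, ∑ t, condJoint σ τ x t * w x = (∑ t, condJoint σ τ x t) * w x := by
      intro x; rw [Finset.sum_mul]
    rw [Finset.sum_congr rfl fun x _ => hx x,
      ← Finset.sum_filter_add_sum_filter_not Finset.univ P]
    congr 1
    · rw [hα, Finset.sum_mul]
      apply Finset.sum_congr rfl
      intro x hxmem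
      rw [Finset.mem_filter] at hxmem
      have : w x = L := by rw [hw]; dsimp only; rw [if_pos hxmem.2]
      rw [this]
    · rw [hβ, Finset.sum_mul]
      apply Finset.sum_congr rfl
      intro x hxmem
      rw [Finset.mem_filter] at hxmem
      have : w x = 1 + (1 - 7*γ) * L := by rw [hw]; dsimp only; rw [if_neg hxmem.2]
      rw [this]
  have hfin : (1 - γ) * L ≤ α * L + (1 - α) * (1 + (1 - 7*γ) * L) := by
    have hβeq : β = 1 - α := by linarith
    rw [← hβeq]
    calc (1 - γ) * L ≤ condEntS σ τ := hent
      _ ≤ _ := le_trans step1 step2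
      _ = _ := step3
  have hu : 1 + γ ≤ γ * L := by
    have h := mul_le_mul_of_nonneg_left hLB hγ.le
    have h2 : γ * (1/γ + 1) = 1 + γ := by field_simp
    linarith
  have hv : α * (γ * L) ≤ (42/205) * (γ * L) :=
    mul_le_mul_of_nonneg_right hα42.le (mul_nonneg hγ.le hL0)
  nlinarith [hfin, hu, hv, hα0]
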